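/- The number of sequences q of length n over {A,C,G,T} with GC-content w (i.e., exactly w coordinates in {G,C}) and no two consecutive Watson-Crick complementary letters (μ_1(q) = 0) equals the coefficient of x^n y^w in the formal power series expansion of Φ(x,y) = (1 − 2x/(1+x) − 2xy/(1+xy))^{−1}. -/

import Mathlib

inductive Base : Type
  | A | C | G | T
deriving DecidableEq

instance : Fintype Base :=
  ⟨{Base.A, Base.C, Base.G, Base.T}, fun x => by cases x <;> simp⟩

def Base.compl : Base → Base
  | .A => .T
  | .T => .A
  | .C => .G
  | .G => .C

open MvPowerSeries in
/-- The Goulden-Jackson generating function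
`Φ(x,y) = (1 - 2x/(1+x) - 2xy/(1+xy))⁻¹`, with `x = X 0`, `y = X 1`. -/
noncomputable def Phi : MvPowerSeries (Fin 2) ℚ :=
  (1 - 2 * X 0 * (1 + X 0)⁻¹ - 2 * (X 0 * X 1) * (1 + X 0 * X 1)⁻¹)⁻¹

section PartA

open MvPowerSeries Finsupp

noncomputable abbrev xx : MvPowerSeries (Fin 2) ℚ := X 0
noncomputable abbrev zz : MvPowerSeries (Fin 2) ℚ := X 0 * X 1

lemma hc1 : constantCoeff (1 + xx) ≠ 0 := by
  simp [constantCoeff_X]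

lemma hc2 : constantCoeff (1 + zz) ≠ 0 := by
  simp [constantCoeff_X]

lemma hcB : constantCoeff
    ((1 - 2 * X 0 * (1 + X 0)⁻¹ - 2 * (X 0 * X 1) * (1 + X 0 * X 1)⁻¹ : MvPowerSeries (Fin 2) ℚ)) ≠ 0 := by
  simp [constantCoeff_X]

lemma key : Phi * (1 - xx - zz - 3 * (xx * zz)) = 1 + xx + zz + xx * zz := by
  have h1 : (1 + xx)⁻¹ * (1 + xx) = 1 := MvPowerSeries.inv_mul_cancel _ hc1
  have h2 : (1 + zz)⁻¹ * (1 + zz) = 1 := MvPowerSeries.inv_mul_cancel _ hc2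
  have hB : (1 - 2 * xx * (1 + xx)⁻¹ - 2 * zz * (1 + zz)⁻¹) * ((1 + xx) * (1 + zz))
      = 1 - xx - zz - 3 * (xx * zz) := by
    linear_combination (-2 * xx * (1 + zz)) * h1 + (-2 * zz * (1 + xx)) * h2
  have hPB : Phi * (1 - 2 * xx * (1 + xx)⁻¹ - 2 * zz * (1 + zz)⁻¹) = 1 :=
    MvPowerSeries.inv_mul_cancel _ hcB
  calc Phi * (1 - xx - zz - 3 * (xx * zz))
      = Phi * ((1 - 2 * xx * (1 + xx)⁻¹ - 2 * zz * (1 + zz)⁻¹) * ((1 + xx) * (1 + zz))) := by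
        rw [hB]
    _ = (Phi * (1 - 2 * xx * (1 + xx)⁻¹ - 2 * zz * (1 + zz)⁻¹)) * ((1 + xx) * (1 + zz)) := by
        ring
    _ = 1 + xx + zz + xx * zz := by rw [hPB]; ring

noncomputable abbrev mm (n w : ℕ) : Fin 2 →₀ ℕ := Finsupp.single 0 n + Finsupp.single 1 w

lemma mm_apply0 (n w : ℕ) : mm n w 0 = n := by
  simp [mm, Finsupp.single_apply]

lemma mm_apply1 (n w : ℕ) : mm n w 1 = w := by
  simp [mm, Finsupp.single_apply]

lemma mm_le (a b n w : ℕ) : mm a b ≤ mm n w ↔ a ≤ n ∧ b ≤ w := by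
  constructor
  · intro h
    exact ⟨by simpa [mm_apply0] using h 0, by simpa [mm_apply1] using h 1⟩
  · intro ⟨h1, h2⟩ i
    fin_cases i
    · simpa [mm_apply0] using h1
    · simpa [mm_apply1] using h2

lemma mm_sub (a b n w : ℕ) : mm n w - mm a b = mm (n - a) (w - b) := by
  ext i
  fin_cases i
  · simp [Finsupp.tsub_apply, mm_apply0]
  · simp [Finsupp.tsub_apply, mm_apply1]

lemma mm_inj {a b n w : ℕ} : mm n w = mm a b ↔ n = a ∧ w = b := by
  constructor
  · intro h
    exact ⟨by rw [← mm_apply0 n w, h, mm_apply0], by rw [← mm_apply1 n w, h, mm_apply1]⟩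
  · rintro ⟨rfl, rfl⟩; rfl

lemma mm_eq_zero {n w : ℕ} : mm n w = 0 ↔ n = 0 ∧ w = 0 := by
  rw [show (0 : Fin 2 →₀ ℕ) = mm 0 0 by simp [mm], mm_inj]

noncomputable def phiC (n w : ℕ) : ℚ := MvPowerSeries.coeff (mm n w) Phi

lemma xx_eq : xx = monomial (mm 1 0) 1 := by
  simp [mm, X_def]

lemma zz_eq : zz = monomial (mm 1 1) 1 := by
  rw [show zz = X 0 * X 1 from rfl, X_def, X_def, monomial_mul_monomial, mul_one]

lemma xz_eq : xx * zz = monomial (mm 2 1) 1 := by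
  rw [show xx * zz = X 0 ^ 2 * X 1 by ring, X_pow_eq, X_def, monomial_mul_monomial, mul_one]

lemma coeff_phi_mul (n w a b : ℕ) :
    MvPowerSeries.coeff (mm n w) (Phi * monomial (mm a b) 1)
      = if a ≤ n ∧ b ≤ w then phiC (n - a) (w - b) else 0 := by
  rw [coeff_mul_monomial]
  simp only [mm_le, mm_sub, mul_one]
  rfl

lemma phiC_rec (n w : ℕ) :
    phiC n w - (if 1 ≤ n then phiC (n-1) w else 0)
      - (if 1 ≤ n ∧ 1 ≤ w then phiC (n-1) (w-1) else 0)
      - 3 * (if 2 ≤ n ∧ 1 ≤ w then phiC (n-2) (w-1) else 0)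
    = (if n = 0 ∧ w = 0 then 1 else 0) + (if n = 1 ∧ w = 0 then 1 else 0)
      + (if n = 1 ∧ w = 1 then 1 else 0) + (if n = 2 ∧ w = 1 then 1 else 0) := by
  have key2 : Phi - Phi * xx - Phi * zz
      - (Phi * (xx * zz) + Phi * (xx * zz) + Phi * (xx * zz))
      = 1 + xx + zz + xx * zz := by linear_combination key
  have h := congrArg (MvPowerSeries.coeff (mm n w)) key2
  rw [xz_eq, xx_eq, zz_eq] at h
  simp only [map_sub, map_add, coeff_phi_mul] at h
  simp only [MvPowerSeries.coeff_one, MvPowerSeries.coeff_monomial, mm_eq_zero, mm_inj] at h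
  have e1 : (if 1 ≤ n then phiC (n-1) w else 0)
      = (if 1 ≤ n ∧ 0 ≤ w then phiC (n-1) (w-0) else 0) := by simp
  rw [e1]
  rw [show phiC n w = MvPowerSeries.coeff (mm n w) Phi from rfl]
  linear_combination h


end PartA

namespace GJ


lemma sum_base {M : Type*} [AddCommMonoid M] (f : Base → M) :
    ∑ b : Base, f b = f .A + f .C + f .G + f .T := by
  show (Finset.univ : Finset Base).sum f = _
  rw [show (Finset.univ : Finset Base) = {Base.A, Base.C, Base.G, Base.T} by rfl]
  simp [Finset.sum_insert, add_assoc]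

lemma compl_compl (b : Base) : b.compl.compl = b := by cases b <;> rfl

lemma compl_eq_iff (a c : Base) : a.compl = c ↔ a = c.compl := by cases a <;> cases c <;> simp [Base.compl]

def gd {n : ℕ} (q : Fin n → Base) : Prop :=
  ∀ ℓ, ∀ h : ℓ + 1 < n, q ⟨ℓ + 1, h⟩ ≠ (q ⟨ℓ, Nat.lt_of_succ_lt h⟩).compl

def wgt {n : ℕ} (q : Fin n → Base) : ℕ :=
  (Finset.univ.filter (fun i : Fin n => q i = Base.G ∨ q i = Base.C)).card

def ok {n : ℕ} (w : ℕ) (q : Fin n → Base) : Prop := wgt q = w ∧ gd q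

noncomputable def cnt (n w : ℕ) : ℕ := Nat.card {q : Fin n → Base // ok w q}

noncomputable def cntb (n w : ℕ) (b : Base) : ℕ :=
  Nat.card {q : Fin (n+1) → Base // ok w q ∧ q 0 = b}

def dB (b : Base) : ℕ := if b = Base.G ∨ b = Base.C then 1 else 0

lemma wgt_eq_sum {n} (q : Fin n → Base) :
    wgt q = ∑ i, (if q i = Base.G ∨ q i = Base.C then 1 else 0) :=
  Finset.card_filter _ _

lemma cons_at_zero {n} (b : Base) (r : Fin (n+1) → Base) (h : 0 < n+2) :
    (Fin.cons b r : Fin (n+2) → Base) ⟨0, h⟩ = b := rfl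

lemma cons_at_succ {n} (b : Base) (r : Fin (n+1) → Base) (ℓ : ℕ) (h : ℓ + 1 < n + 2) :
    (Fin.cons b r : Fin (n+2) → Base) ⟨ℓ+1, h⟩ = r ⟨ℓ, by omega⟩ := rfl

lemma wgt_cons {n} (b : Base) (r : Fin n → Base) :
    wgt (Fin.cons b r) = dB b + wgt r := by
  rw [wgt_eq_sum, wgt_eq_sum, Fin.sum_univ_succ]
  simp [dB]

lemma gd_cons {n} (b : Base) (r : Fin (n+1) → Base) :
    gd (Fin.cons b r) ↔ r 0 ≠ b.compl ∧ gd r := by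
  constructor
  · intro h
    constructor
    · have h0 := h 0 (by omega)
      rwa [cons_at_succ, cons_at_zero] at h0
    · intro ℓ hh
      have hs := h (ℓ+1) (by omega)
      rwa [cons_at_succ, cons_at_succ] at hs
  · rintro ⟨h0, hr⟩ ℓ hh
    match ℓ, hh with
    | 0, hh => rw [cons_at_succ, cons_at_zero]; exact h0
    | (ℓ+1), hh =>
      rw [cons_at_succ, cons_at_succ]
      exact hr ℓ (by omega)

lemma natCard_sigma {ι : Type*} [Fintype ι] (f : ι → Type*) [∀ i, Finite (f i)] :
    Nat.card (Σ i, f i) = ∑ i, Nat.card (f i) := by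
  haveI := fun i => Fintype.ofFinite (f i)
  simp [Nat.card_eq_fintype_card]

lemma card_part {n : ℕ} (P : (Fin (n+1) → Base) → Prop) :
    Nat.card {q : Fin (n+1) → Base // P q}
      = ∑ b : Base, Nat.card {q : Fin (n+1) → Base // P q ∧ q 0 = b} := by
  have e1 : (Σ b : Base, {x : {q : Fin (n+1) → Base // P q} // x.1 0 = b})
      ≃ {q : Fin (n+1) → Base // P q} :=
    Equiv.sigmaFiberEquiv (fun x : {q : Fin (n+1) → Base // P q} => x.1 0)
  rw [← Nat.card_congr e1, natCard_sigma]
  refine Finset.sum_congr rfl fun b _ => Nat.card_congr ?_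
  exact Equiv.subtypeSubtypeEquivSubtypeInter P (fun q => q 0 = b)

def consEquiv (n w : ℕ) (b : Base) :
    {q : Fin (n+2) → Base // ok (dB b + w) q ∧ q 0 = b}
      ≃ {r : Fin (n+1) → Base // ok w r ∧ r 0 ≠ b.compl} where
  toFun x := ⟨Fin.tail x.1, by
    obtain ⟨q, ⟨hw, hg⟩, h0⟩ := x
    have hq : Fin.cons b (Fin.tail q) = q := by rw [← h0]; exact Fin.cons_self_tail q
    rw [← hq] at hw hg
    rw [wgt_cons] at hw
    rw [gd_cons] at hg
    exact ⟨⟨Nat.add_left_cancel hw, hg.2⟩, hg.1⟩⟩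
  invFun y := ⟨Fin.cons b y.1, by
    obtain ⟨r, ⟨hw, hg⟩, h0⟩ := y
    exact ⟨⟨by rw [wgt_cons, hw], (gd_cons b r).2 ⟨h0, hg⟩⟩, rfl⟩⟩
  left_inv x := Subtype.ext (by
    obtain ⟨q, ⟨hw, hg⟩, h0⟩ := x
    show Fin.cons b (Fin.tail q) = q
    rw [← h0]; exact Fin.cons_self_tail q)
  right_inv y := Subtype.ext (funext fun i => rfl)

lemma cnt_succ (n w : ℕ) : cnt (n+1) w = ∑ b : Base, cntb n w b :=
  card_part (ok w)

lemma cntb_succ (n w : ℕ) (b : Base) :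
    cntb (n+1) (dB b + w) b
      = ∑ b' : Base, if b' = b.compl then 0 else cntb n w b' := by
  have h1 : cntb (n+1) (dB b + w) b
      = Nat.card {r : Fin (n+1) → Base // (ok w r ∧ r 0 ≠ b.compl)} :=
    Nat.card_congr (consEquiv n w b)
  rw [h1, card_part (fun r => ok w r ∧ r 0 ≠ b.compl)]
  refine Finset.sum_congr rfl fun b' _ => ?_
  split_ifs with hb
  · subst hb
    have : IsEmpty {q : Fin (n+1) → Base // (ok w q ∧ q 0 ≠ b.compl) ∧ q 0 = b.compl} :=
      ⟨fun x => x.2.1.2 x.2.2⟩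
    exact Nat.card_of_isEmpty
  · exact Nat.card_congr (Equiv.subtypeEquivRight fun r => by
      constructor
      · rintro ⟨⟨h1, _⟩, h2⟩; exact ⟨h1, h2⟩
      · rintro ⟨h1, h2⟩; exact ⟨⟨h1, h2 ▸ hb⟩, h2⟩)

lemma wgt_compl {n} (q : Fin n → Base) : wgt (fun i => (q i).compl) = wgt q := by
  rw [wgt_eq_sum, wgt_eq_sum]
  refine Finset.sum_congr rfl fun i _ => ?_
  cases q i <;> simp [Base.compl]

lemma gd_compl {n} (q : Fin n → Base) : gd (fun i => (q i).compl) ↔ gd q := by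
  unfold gd
  refine forall_congr' fun ℓ => forall_congr' fun h => not_iff_not.mpr ?_
  rw [compl_eq_iff, compl_compl]

def complEquiv (n w : ℕ) (b : Base) :
    {q : Fin (n+1) → Base // ok w q ∧ q 0 = b}
      ≃ {q : Fin (n+1) → Base // ok w q ∧ q 0 = b.compl} where
  toFun x := ⟨fun i => (x.1 i).compl,
    ⟨⟨by rw [wgt_compl]; exact x.2.1.1, (gd_compl _).mpr x.2.1.2⟩, by
      show (x.1 0).compl = b.compl; rw [x.2.2]⟩⟩
  invFun x := ⟨fun i => (x.1 i).compl,
    ⟨⟨by rw [wgt_compl]; exact x.2.1.1, (gd_compl _).mpr x.2.1.2⟩, by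
      show (x.1 0).compl = b; rw [x.2.2, compl_compl]⟩⟩
  left_inv x := Subtype.ext (funext fun i => compl_compl _)
  right_inv x := Subtype.ext (funext fun i => compl_compl _)

lemma cntb_compl (n w : ℕ) (b : Base) : cntb n w b.compl = cntb n w b :=
  (Nat.card_congr (complEquiv n w b)).symm

lemma cnt_zero (w : ℕ) : cnt 0 w = if w = 0 then 1 else 0 := by
  have hall : ∀ q : Fin 0 → Base, ok 0 q := by
    intro q
    refine ⟨by simp [wgt], fun ℓ h => by omega⟩
  split_ifs with h
  · subst h
    rw [cnt, Nat.card_congr (Equiv.subtypeUnivEquiv hall)]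
    simp [Nat.card_eq_fintype_card]
  · have : IsEmpty {q : Fin 0 → Base // ok w q} :=
      ⟨fun x => h (x.2.1.symm.trans (hall x.1).1)⟩
    exact Nat.card_of_isEmpty

lemma wgt_one (q : Fin 1 → Base) : wgt q = dB (q 0) := by
  rw [wgt_eq_sum, Fin.sum_univ_one]
  rfl

lemma gd_one (q : Fin 1 → Base) : gd q := fun ℓ h => by omega

lemma cntb_zero (w : ℕ) (b : Base) : cntb 0 w b = if w = dB b then 1 else 0 := by
  split_ifs with h
  · rw [cntb, Nat.card_eq_one_iff_unique]
    constructor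
    · constructor
      rintro ⟨q1, h1⟩ ⟨q2, h2⟩
      refine Subtype.ext (funext fun i => ?_)
      fin_cases i
      show q1 0 = q2 0
      rw [h1.2, h2.2]
    · exact ⟨⟨fun _ => b, ⟨by rw [wgt_one, h], gd_one _⟩, rfl⟩⟩
  · have : IsEmpty {q : Fin 1 → Base // ok w q ∧ q 0 = b} := ⟨fun x => by
      apply h
      rw [← x.2.1.1, wgt_one, x.2.2]⟩
    exact Nat.card_of_isEmpty

lemma cntb_G_zero (n : ℕ) : cntb n 0 Base.G = 0 := by
  have : IsEmpty {q : Fin (n+1) → Base // ok 0 q ∧ q 0 = Base.G} := ⟨fun x => by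
    obtain ⟨q, ⟨hw, _⟩, h0⟩ := x
    have hm : (0 : Fin (n+1)) ∈ Finset.univ.filter
        (fun i => q i = Base.G ∨ q i = Base.C) := by simp [h0]
    rw [wgt] at hw
    rw [Finset.card_eq_zero.mp hw] at hm
    exact absurd hm (Finset.notMem_empty _)⟩
  exact Nat.card_of_isEmpty

lemma cntb_C_eq (n w : ℕ) : cntb n w Base.C = cntb n w Base.G := cntb_compl n w Base.G

lemma cntb_T_eq (n w : ℕ) : cntb n w Base.T = cntb n w Base.A := cntb_compl n w Base.A

lemma cntb_A_succ (n w : ℕ) :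
    cntb (n+1) w Base.A = cntb n w Base.A + 2 * cntb n w Base.G := by
  have h := cntb_succ n w Base.A
  rw [sum_base] at h
  simp only [show Base.A.compl = Base.T from rfl, show dB Base.A = 0 from rfl,
    Nat.zero_add] at h
  simp only [cntb_C_eq, cntb_T_eq] at h
  simp at h
  omega

lemma cntb_G_succ (n w : ℕ) :
    cntb (n+1) (w+1) Base.G = 2 * cntb n w Base.A + cntb n w Base.G := by
  have h := cntb_succ n w Base.G
  rw [sum_base] at h
  simp only [show Base.G.compl = Base.C from rfl, show dB Base.G = 1 from rfl] at h
  simp only [cntb_C_eq, cntb_T_eq] at h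
  simp at h
  rw [show w + 1 = 1 + w by omega]
  omega

lemma cnt_succ_eval (n w : ℕ) :
    cnt (n+1) w = 2 * cntb n w Base.A + 2 * cntb n w Base.G := by
  rw [cnt_succ, sum_base, cntb_C_eq, cntb_T_eq]
  omega

lemma cnt_one (w : ℕ) : cnt 1 w = if w = 0 then 2 else if w = 1 then 2 else 0 := by
  rw [cnt_succ_eval, cntb_zero, cntb_zero]
  rcases w with _ | _ | w <;> simp [dB]

lemma cnt_succ_zero (n : ℕ) : cnt (n+2) 0 = cnt (n+1) 0 := by
  rw [cnt_succ_eval, cnt_succ_eval, cntb_A_succ, cntb_G_zero, cntb_G_zero]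
  omega

lemma main_rec (n w : ℕ) :
    cnt (n+2) (w+1) = cnt (n+1) (w+1) + cnt (n+1) w + 3 * cnt n w
      + (if n = 0 ∧ w = 0 then 1 else 0) := by
  match n with
  | Nat.succ m =>
    simp only [Nat.succ_ne_zero, false_and, if_false, Nat.add_zero]
    rw [cnt_succ_eval (m+2), cnt_succ_eval (m+1), cnt_succ_eval (m+1) w,
      cnt_succ_eval m w, cntb_A_succ (m+1), cntb_G_succ (m+1),
      cntb_G_succ m w, cntb_A_succ m w]
    ring
  | 0 =>
    rw [cnt_succ_eval 1, cntb_A_succ 0, cntb_G_succ 0, cnt_one, cnt_one, cnt_zero]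
    rcases w with _ | _ | w <;> simp [cntb_zero, dB]

lemma cnt_rec (n w : ℕ) :
    (cnt n w : ℚ) - (if 1 ≤ n then (cnt (n-1) w : ℚ) else 0)
      - (if 1 ≤ n ∧ 1 ≤ w then (cnt (n-1) (w-1) : ℚ) else 0)
      - 3 * (if 2 ≤ n ∧ 1 ≤ w then (cnt (n-2) (w-1) : ℚ) else 0)
    = (if n = 0 ∧ w = 0 then 1 else 0) + (if n = 1 ∧ w = 0 then 1 else 0)
      + (if n = 1 ∧ w = 1 then 1 else 0) + (if n = 2 ∧ w = 1 then 1 else 0) := by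
  match n, w with
  | 0, w =>
    rcases w with _ | w <;> simp [cnt_zero]
  | 1, 0 =>
    norm_num [cnt_one, cnt_zero]
  | 1, (w+1) =>
    rcases w with _ | w <;> norm_num [cnt_one, cnt_zero]
  | (n+2), 0 =>
    have h : ((cnt (n+2) 0 : ℕ) : ℚ) = (cnt (n+1) 0 : ℚ) := by
      exact_mod_cast congrArg (Nat.cast : ℕ → ℚ) (cnt_succ_zero n)
    simp only [show (1:ℕ) ≤ n + 2 by omega, show ¬ (1:ℕ) ≤ 0 by omega, and_false,
      if_false, if_true, show n + 2 - 1 = n + 1 from rfl]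
    rw [h]
    have e0 : ¬ (n + 2 = 0) := by omega
    have e1 : ¬ (n + 2 = 1) := by omega
    norm_num [e0, e1]
  | (n+2), (w+1) =>
    have h := main_rec n w
    have h2 : ((cnt (n+2) (w+1) : ℕ) : ℚ)
        = (cnt (n+1) (w+1) : ℚ) + (cnt (n+1) w : ℚ) + 3 * (cnt n w : ℚ)
          + (if n = 0 ∧ w = 0 then 1 else 0) := by
      rw [h]
      push_cast
      split_ifs <;> push_cast <;> ring
    simp only [show (1:ℕ) ≤ n + 2 by omega, show (1:ℕ) ≤ w + 1 by omega,
      show (2:ℕ) ≤ n + 2 by omega, true_and, if_true, and_true,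
      show n + 2 - 1 = n + 1 from rfl, show n + 2 - 2 = n from rfl,
      show w + 1 - 1 = w from rfl]
    rw [h2]
    have e0 : ¬ (n + 2 = 0 ∧ w + 1 = 0) := by omega
    have e1 : ¬ (n + 2 = 1 ∧ w + 1 = 0) := by omega
    have e2 : ¬ (n + 2 = 1 ∧ w + 1 = 1) := by omega
    rw [if_neg e0, if_neg e1, if_neg e2]
    have : (n + 2 = 2 ∧ w + 1 = 1) ↔ (n = 0 ∧ w = 0) := by omega
    rw [if_congr this rfl rfl]
    ring

end GJ

lemma phiC_eq_cnt (n : ℕ) : ∀ w, phiC n w = (GJ.cnt n w : ℚ) := by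
  induction n using Nat.strong_induction_on with
  | _ n ih =>
    intro w
    have h1 := phiC_rec n w
    have h2 := GJ.cnt_rec n w
    have e1 : (if 1 ≤ n then phiC (n-1) w else 0)
        = (if 1 ≤ n then ((GJ.cnt (n-1) w : ℕ) : ℚ) else 0) := by
      split_ifs with h
      · exact ih (n-1) (by omega) w
      · rfl
    have e2 : (if 1 ≤ n ∧ 1 ≤ w then phiC (n-1) (w-1) else 0)
        = (if 1 ≤ n ∧ 1 ≤ w then ((GJ.cnt (n-1) (w-1) : ℕ) : ℚ) else 0) := by
      split_ifs with h
      · exact ih (n-1) (by omega) (w-1)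
      · rfl
    have e3 : (if 2 ≤ n ∧ 1 ≤ w then phiC (n-2) (w-1) else 0)
        = (if 2 ≤ n ∧ 1 ≤ w then ((GJ.cnt (n-2) (w-1) : ℕ) : ℚ) else 0) := by
      split_ifs with h
      · exact ih (n-2) (by omega) (w-1)
      · rfl
    rw [e1, e2, e3] at h1
    linarith [h1, h2]

/-- The number of length-`n` DNA sequences with GC-content `w` and no two consecutive
Watson-Crick complementary letters (`μ_1(q) = 0`) equals the coefficient of `x^n y^w`
in the formal power series expansion of `Φ(x,y) = (1 - 2x/(1+x) - 2xy/(1+xy))⁻¹`. -/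
theorem stmt18 (n w : ℕ) :
    (MvPowerSeries.coeff (Finsupp.single 0 n + Finsupp.single 1 w)) Phi
      = (Nat.card {q : Fin n → Base //
          (Finset.univ.filter (fun i : Fin n => q i = Base.G ∨ q i = Base.C)).card = w ∧
          ∀ ℓ, ∀ h : ℓ + 1 < n, q ⟨ℓ + 1, h⟩ ≠ (q ⟨ℓ, by omega⟩).compl} : ℚ) := by
  exact phiC_eq_cnt n w
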